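/- Let 𝔤 = V₁ ⊕ ⋯ ⊕ V_s be a stratified real Lie algebra of step s ≥ 2 and let k ≥ 0 be an integer. Let 𝔤³ = [𝔤,[𝔤,𝔤]] be the third term of the lower central series of 𝔤, so that the quotient 𝔤/𝔤³ is a stratified Lie algebra of step 2 with strata the images of V₁ and V₂. Then 𝔤 is hypergenerated of order k if and only if 𝔤/𝔤³ is hypergenerated of order k. -/

import Mathlib

/-- The submodule of a Lie algebra spanned by brackets of elements of two submodules. -/
def bracketSpan {L : Type*} [LieRing L] [LieAlgebra ℝ L] (A B : Submodule ℝ L) :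
    Submodule ℝ L :=
  Submodule.span ℝ {z | ∃ x ∈ A, ∃ y ∈ B, ⁅x, y⁆ = z}

/-- The commutator submodule `[𝔤, 𝔤]` of a Lie algebra. -/
def commutatorSubmodule (L : Type*) [LieRing L] [LieAlgebra ℝ L] : Submodule ℝ L :=
  bracketSpan (⊤ : Submodule ℝ L) ⊤

namespace BSpan
variable {L : Type*} [LieRing L] [LieAlgebra ℝ L] {A B C A' B' : Submodule ℝ L}

lemma lie_mem {x y : L} (hx : x ∈ A) (hy : y ∈ B) : ⁅x, y⁆ ∈ bracketSpan A B :=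
  Submodule.subset_span ⟨x, hx, y, hy, rfl⟩

lemma bs_le : bracketSpan A B ≤ C ↔ ∀ x ∈ A, ∀ y ∈ B, ⁅x, y⁆ ∈ C := by
  rw [bracketSpan, Submodule.span_le]
  constructor
  · intro h x hx y hy; exact h ⟨x, hx, y, hy, rfl⟩
  · rintro h z ⟨x, hx, y, hy, rfl⟩; exact h x hx y hy

lemma mono (hA : A ≤ A') (hB : B ≤ B') : bracketSpan A B ≤ bracketSpan A' B' :=
  bs_le.2 fun x hx y hy => lie_mem (hA hx) (hB hy)

lemma bot_right : bracketSpan A ⊥ = ⊥ := by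
  refine le_bot_iff.1 (bs_le.2 fun x _ y hy => ?_)
  rw [Submodule.mem_bot] at hy ⊢; rw [hy, lie_zero]

lemma comm : bracketSpan A B = bracketSpan B A := by
  have key : ∀ (X Y : Submodule ℝ L), bracketSpan X Y ≤ bracketSpan Y X := by
    intro X Y
    refine bs_le.2 fun x hx y hy => ?_
    rw [← lie_skew]
    exact Submodule.neg_mem _ (lie_mem hy hx)
  exact le_antisymm (key A B) (key B A)

lemma bot_left : bracketSpan ⊥ B = ⊥ := by rw [comm]; exact bot_right

lemma sup_right : bracketSpan A (B ⊔ C) = bracketSpan A B ⊔ bracketSpan A C := by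
  refine le_antisymm (bs_le.2 fun x hx y hy => ?_) ?_
  · obtain ⟨b, hb, c, hc, rfl⟩ := Submodule.mem_sup.1 hy
    rw [lie_add]
    exact Submodule.add_mem _ (Submodule.mem_sup_left (lie_mem hx hb))
      (Submodule.mem_sup_right (lie_mem hx hc))
  · exact sup_le (mono le_rfl le_sup_left) (mono le_rfl le_sup_right)

lemma sup_left : bracketSpan (A ⊔ B) C = bracketSpan A C ⊔ bracketSpan B C := by
  rw [comm, sup_right, show bracketSpan C A = bracketSpan A C from comm,
    show bracketSpan C B = bracketSpan B C from comm]

lemma iSup_right_le {ι : Sort*} (Bs : ι → Submodule ℝ L) :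
    bracketSpan A (⨆ i, Bs i) ≤ ⨆ i, bracketSpan A (Bs i) := by
  refine bs_le.2 fun x hx y hy => ?_
  refine Submodule.iSup_induction Bs (motive := fun y => ⁅x, y⁆ ∈ ⨆ i, bracketSpan A (Bs i)) hy
    (fun i y hy => Submodule.mem_iSup_of_mem i (lie_mem hx hy)) (by simp)
    (fun y z hy hz => by rw [lie_add]; exact Submodule.add_mem _ hy hz)

lemma iSup_left_le {ι : Sort*} (As : ι → Submodule ℝ L) :
    bracketSpan (⨆ i, As i) B ≤ ⨆ i, bracketSpan (As i) B := by
  rw [comm]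
  refine (iSup_right_le As).trans ?_
  exact iSup_mono fun i => le_of_eq comm

lemma jacobi : bracketSpan A (bracketSpan B C) ≤
    bracketSpan (bracketSpan A B) C ⊔ bracketSpan B (bracketSpan A C) := by
  refine bs_le.2 fun x hx y hy => ?_
  induction hy using Submodule.span_induction with
  | mem z hz =>
    obtain ⟨b, hb, c, hc, rfl⟩ := hz
    rw [leibniz_lie]
    exact Submodule.add_mem _
      (Submodule.mem_sup_left (lie_mem (lie_mem hx hb) hc))
      (Submodule.mem_sup_right (lie_mem hb (lie_mem hx hc)))
  | zero => simp
  | add y z _ _ hy hz => rw [lie_add]; exact Submodule.add_mem _ hy hz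
  | smul t y _ hy => rw [lie_smul]; exact Submodule.smul_mem _ _ hy

lemma map_bs {L' : Type*} [LieRing L'] [LieAlgebra ℝ L'] (f : L →ₗ[ℝ] L')
    (hf : ∀ x y, f ⁅x, y⁆ = ⁅f x, f y⁆) (A B : Submodule ℝ L) :
    (bracketSpan A B).map f = bracketSpan (A.map f) (B.map f) := by
  rw [bracketSpan, Submodule.map_span, bracketSpan]
  congr 1
  ext z
  constructor
  · rintro ⟨_, ⟨x, hx, y, hy, rfl⟩, rfl⟩
    exact ⟨f x, ⟨x, hx, rfl⟩, f y, ⟨y, hy, rfl⟩, (hf x y).symm⟩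
  · rintro ⟨_, ⟨x, hx, rfl⟩, _, ⟨y, hy, rfl⟩, rfl⟩
    exact ⟨⁅x, y⁆, ⟨x, hx, y, hy, rfl⟩, hf x y⟩

end BSpan


/-- A family `V` of submodules of a real Lie algebra `L` is a stratification of step `s` if
`L = V 1 ⊕ ⋯ ⊕ V s`, `[V 1, V (i-1)] = V i` for `2 ≤ i ≤ s`, `V s ≠ 0` and `[V 1, V s] = 0`.
We also require `V i = 0` for `i = 0` and `i > s`. -/
structure IsStratification (L : Type*) [LieRing L] [LieAlgebra ℝ L]
    (V : ℕ → Submodule ℝ L) (s : ℕ) : Prop where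
  one_le_step : 1 ≤ s
  isInternal : DirectSum.IsInternal (fun i : Fin s => V (i.1 + 1))
  bracket_eq : ∀ i, 2 ≤ i → i ≤ s → bracketSpan (V 1) (V (i - 1)) = V i
  last_ne_bot : V s ≠ ⊥
  bracket_last_eq_bot : bracketSpan (V 1) (V s) = ⊥
  zero_eq_bot : V 0 = ⊥
  eq_bot_of_gt : ∀ i, s < i → V i = ⊥

/-- A stratified real Lie algebra with strata `V` and rank `m = dim (V 1)` is hypergenerated of
order `k` if every subspace `P ⊆ V 1` with `dim P = m - k` satisfies `[𝔤,𝔤] ⊆ Lie(P)`. -/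
def IsHypergenerated (L : Type*) [LieRing L] [LieAlgebra ℝ L]
    (V : ℕ → Submodule ℝ L) (k : ℕ) : Prop :=
  ∀ P : Submodule ℝ L, P ≤ V 1 →
    Module.finrank ℝ P = Module.finrank ℝ (V 1) - k →
    commutatorSubmodule L ≤ (LieSubalgebra.lieSpan ℝ L (P : Set L)).toSubmodule



section Strat
open BSpan

variable {L : Type*} [LieRing L] [LieAlgebra ℝ L] {V : ℕ → Submodule ℝ L} {s : ℕ}

/-- Sup of the strata of degree `> h`. -/
def UU (V : ℕ → Submodule ℝ L) (h : ℕ) : Submodule ℝ L := ⨆ i, V (h + 1 + i)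

lemma V_le_UU {h i : ℕ} (hi : h + 1 ≤ i) : V i ≤ UU V h := by
  have h1 : i = h + 1 + (i - (h + 1)) := by omega
  rw [h1]; exact le_iSup (fun j => V (h + 1 + j)) _

variable (hst : IsStratification L V s)
include hst

lemma bracket_le_V : ∀ i, bracketSpan (V 1) (V i) ≤ V (i + 1) := by
  intro i
  rcases Nat.eq_zero_or_pos i with rfl | hi
  · rw [hst.zero_eq_bot, bot_right]; exact bot_le
  by_cases his : i + 1 ≤ s
  · exact le_of_eq <| by simpa using hst.bracket_eq (i + 1) (by omega) his
  · rcases eq_or_lt_of_le (not_lt.1 (fun h => his h) : s ≤ i) with rfl | hlt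
    · rw [hst.bracket_last_eq_bot]; exact bot_le
    · rw [hst.eq_bot_of_gt i hlt, bot_right]; exact bot_le

lemma V_succ_le {i : ℕ} (hi : 1 ≤ i) : V (i + 1) ≤ bracketSpan (V 1) (V i) := by
  by_cases his : i + 1 ≤ s
  · exact le_of_eq <| by simpa using (hst.bracket_eq (i + 1) (by omega) his).symm
  · rw [hst.eq_bot_of_gt (i + 1) (by omega)]; exact bot_le

lemma bracket_V_V : ∀ i j, bracketSpan (V i) (V j) ≤ V (i + j) := by
  intro i
  induction i using Nat.strong_induction_on with
  | _ i ih =>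
    intro j
    match i, ih with
    | 0, _ => rw [hst.zero_eq_bot, bot_left]; exact bot_le
    | 1, _ => exact le_trans (bracket_le_V hst j) (le_of_eq (by rw [Nat.add_comm]))
    | (n+2), ih =>
      by_cases his : n + 2 ≤ s
      · have h1 : V (n + 2) ≤ bracketSpan (V 1) (V (n + 1)) := V_succ_le hst (by omega)
        refine le_trans (mono h1 le_rfl) ?_
        rw [BSpan.comm]
        refine le_trans jacobi (sup_le ?_ ?_)
        · refine le_trans (mono (le_trans (le_of_eq BSpan.comm) (bracket_le_V hst j)) le_rfl) ?_
          refine le_trans (le_of_eq BSpan.comm) ?_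
          exact le_trans (ih (n+1) (by omega) (j+1)) (le_of_eq (by ring_nf))
        · refine le_trans (mono le_rfl (le_trans (le_of_eq BSpan.comm) (ih (n+1) (by omega) j))) ?_
          exact le_trans (bracket_le_V hst (n+1+j)) (le_of_eq (by ring_nf))
      · rw [hst.eq_bot_of_gt (n+2) (by omega), bot_left]; exact bot_le

lemma UU_zero : UU V 0 = ⊤ := by
  refine le_antisymm le_top ?_
  rw [← hst.isInternal.submodule_iSup_eq_top]
  exact iSup_le fun i => V_le_UU (by omega)

lemma bracket_UU (a b : ℕ) : bracketSpan (UU V a) (UU V b) ≤ UU V (a + b + 1) := by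
  refine le_trans (iSup_left_le _) (iSup_le fun i => ?_)
  refine le_trans (iSup_right_le _) (iSup_le fun j => ?_)
  exact le_trans (bracket_V_V hst _ _) (V_le_UU (by omega))

lemma UU_antitone {a b : ℕ} (hab : a ≤ b) : UU V b ≤ UU V a := by
  exact iSup_le fun i => V_le_UU (by omega)

lemma UU_s : UU V s = ⊥ := by
  refine le_bot_iff.1 (iSup_le fun i => ?_)
  rw [hst.eq_bot_of_gt _ (by omega)]

lemma lcs_eq_UU : ∀ h, (LieModule.lowerCentralSeries ℝ L L h).toSubmodule = UU V h := by
  intro h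
  induction h with
  | zero => rw [LieModule.lowerCentralSeries_zero, UU_zero hst]; rfl
  | succ h ih =>
    have key : (LieModule.lowerCentralSeries ℝ L L (h+1)).toSubmodule =
        bracketSpan ⊤ (LieModule.lowerCentralSeries ℝ L L h).toSubmodule := by
      rw [LieModule.lowerCentralSeries_succ, LieSubmodule.lieIdeal_oper_eq_linear_span',
        bracketSpan]
      congr 1
    rw [key, ih]
    refine le_antisymm ?_ ?_
    · rw [← UU_zero hst]
      have e : 0 + h + 1 = h + 1 := by omega
      exact le_trans (bracket_UU hst 0 h) (le_of_eq (by rw [e]))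
    · refine iSup_le fun i => ?_
      have e : h + 1 + 1 + i = (h + 1 + i) + 1 := by omega
      rw [e]
      exact le_trans (V_succ_le hst (by omega)) (mono le_top (V_le_UU (by omega)))

lemma commutator_eq_UU : commutatorSubmodule L = UU V 1 := by
  have h0 := lcs_eq_UU hst 0
  have h1 := lcs_eq_UU hst 1
  rw [commutatorSubmodule]
  refine le_antisymm ?_ ?_
  · rw [← UU_zero hst]; exact bracket_UU hst 0 0
  · refine iSup_le fun i => ?_
    have e : 1 + 1 + i = (1 + i) + 1 := by omega
    rw [e]
    exact le_trans (V_succ_le hst (by omega)) (mono le_top le_top)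

lemma disjoint_V_UU {a : ℕ} (ha : 1 ≤ a) : Disjoint (V a) (UU V a) := by
  by_cases has : a ≤ s
  · have J := hst.isInternal.submodule_iSupIndep
    have hi0 : a - 1 < s := by omega
    have key : UU V a ≤ ⨆ (j : Fin s) (_ : j ≠ ⟨a - 1, hi0⟩), V (j.1 + 1) := by
      refine iSup_le fun i => ?_
      by_cases hle : a + 1 + i ≤ s
      · have hj : (⟨a + i, by omega⟩ : Fin s) ≠ ⟨a - 1, hi0⟩ := by
          simp only [ne_eq, Fin.mk.injEq]; omega
        exact le_trans (le_of_eq (congrArg V (by omega : a + 1 + i = a + i + 1)))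
          (le_iSup_of_le (⟨a + i, by omega⟩ : Fin s) (le_iSup_of_le hj le_rfl))
      · rw [hst.eq_bot_of_gt _ (by omega)]; exact bot_le
    have hD := J ⟨a - 1, hi0⟩
    simp only at hD
    have ha1 : a - 1 + 1 = a := by omega
    rw [ha1] at hD
    exact hD.mono_right key
  · rw [hst.eq_bot_of_gt _ (by omega)]
    exact disjoint_bot_left

lemma V2_ne_bot (hs : 2 ≤ s) : V 2 ≠ ⊥ := by
  intro h2
  refine hst.last_ne_bot ?_
  have key : ∀ n, V (2 + n) = ⊥ := by
    intro n
    induction n with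
    | zero => exact h2
    | succ n ih =>
      refine le_bot_iff.1 ?_
      have : (2 + (n + 1)) = (2 + n) + 1 := by omega
      rw [this]
      refine le_trans (V_succ_le hst (by omega)) ?_
      rw [ih, bot_right]
    
  have : s = 2 + (s - 2) := by omega
  rw [this, key]

end Strat



section DDSec
open BSpan

variable {L : Type*} [LieRing L] [LieAlgebra ℝ L] {V : ℕ → Submodule ℝ L} {s : ℕ}
  {P : Submodule ℝ L}

noncomputable def DD {L : Type*} [LieRing L] [LieAlgebra ℝ L] (P : Submodule ℝ L) :
    ℕ → Submodule ℝ L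
  | 0 => ⊥
  | 1 => P
  | (n + 2) => ⨆ a : Fin (n + 1), bracketSpan (DD P (a.1 + 1)) (DD P (n + 1 - a.1))
  termination_by n => n
  decreasing_by
  · have := a.isLt; omega
  · omega

@[simp] lemma DD_zero : DD P 0 = ⊥ := by rw [DD]

@[simp] lemma DD_one : DD P 1 = P := by rw [DD]

lemma DD_bracket {a b : ℕ} (ha : 1 ≤ a) (hb : 1 ≤ b) :
    bracketSpan (DD P a) (DD P b) ≤ DD P (a + b) := by
  have h2 : a + b = (a + b - 2) + 2 := by omega
  rw [h2, DD]
  refine le_trans (le_of_eq ?_) (le_iSup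
    (fun c : Fin (a + b - 2 + 1) =>
      bracketSpan (DD P (c.1 + 1)) (DD P (a + b - 2 + 1 - c.1)))
    (⟨a - 1, by omega⟩ : Fin (a + b - 2 + 1)))
  show bracketSpan (DD P a) (DD P b)
      = bracketSpan (DD P (a - 1 + 1)) (DD P (a + b - 2 + 1 - (a - 1)))
  congr 1 <;> congr 1 <;> omega

lemma DD_le_UU (hst : IsStratification L V s) (hP : P ≤ V 1) :
    ∀ n, 1 ≤ n → DD P n ≤ UU V (n - 1) := by
  intro n
  induction n using Nat.strong_induction_on with
  | _ n ih =>
    match n, ih with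
    | 0, _ => intro h0; exact absurd h0 (by omega)
    | 1, _ => intro _; rw [DD_one]; exact le_trans hP (V_le_UU (h := 0) le_rfl)
    | (m+2), ih =>
      intro _
      rw [DD]
      refine iSup_le fun i => ?_
      have hi := i.isLt
      have h1 : DD P (i.1 + 1) ≤ UU V i.1 := by
        have h := ih (i.1 + 1) (by omega) (by omega)
        simpa using h
      have h2 : DD P (m + 1 - i.1) ≤ UU V (m - i.1) := by
        have h := ih (m + 1 - i.1) (by omega) (by omega)
        have e : m + 1 - i.1 - 1 = m - i.1 := by omega
        rwa [e] at h
      refine le_trans (mono h1 h2) ?_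
      exact le_trans (bracket_UU hst _ _) (le_of_eq (congrArg (UU V) (by omega)))

lemma DD_le_H (H : LieSubalgebra ℝ L) (hP : P ≤ H.toSubmodule) :
    ∀ n, DD P n ≤ H.toSubmodule := by
  intro n
  induction n using Nat.strong_induction_on with
  | _ n ih =>
    match n, ih with
    | 0, _ => rw [DD_zero]; exact bot_le
    | 1, _ => rw [DD_one]; exact hP
    | (m+2), ih =>
      rw [DD]
      refine iSup_le fun i => ?_
      have hi := i.isLt
      refine le_trans (mono (ih _ (by omega)) (ih _ (by omega))) ?_
      exact bs_le.2 fun x hx y hy => H.lie_mem hx hy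

lemma DD_key (hst : IsStratification L V s) (hP : P ≤ V 1)
    (hbase : V 2 ≤ DD P 2 ⊔ UU V 2) :
    ∀ a, 1 ≤ a → bracketSpan (V 1) (DD P a) ≤ DD P (a + 1) ⊔ UU V (a + 1) := by
  intro a
  induction a using Nat.strong_induction_on with
  | _ a ih =>
    match a, ih with
    | 0, _ => intro h0; exact absurd h0 (by omega)
    | 1, _ =>
      intro _
      rw [DD_one]
      exact le_trans (mono le_rfl hP) (le_trans (bracket_le_V hst 1) hbase)
    | (m+2), ih =>
      intro _
      conv_lhs => rw [DD]
      refine le_trans (iSup_right_le _) (iSup_le fun i => ?_)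
      have hi := i.isLt
      set p := i.1 + 1 with hp
      set q := m + 1 - i.1 with hq
      have hq1 : 1 ≤ q := by omega
      have hpq : p + q = m + 2 := by omega
      refine le_trans jacobi (sup_le ?_ ?_)
      · refine le_trans (mono (ih p (by omega) (by omega)) le_rfl) ?_
        rw [sup_left]
        refine sup_le (le_sup_of_le_left ?_) (le_sup_of_le_right ?_)
        · exact le_trans (DD_bracket (by omega) (by omega))
            (le_of_eq (congrArg (DD P) (by omega)))
        · refine le_trans (mono le_rfl (DD_le_UU hst hP q (by omega))) ?_
          exact le_trans (bracket_UU hst _ _) (le_of_eq (congrArg (UU V) (by omega)))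
      · refine le_trans (mono le_rfl (ih q (by omega) (by omega))) ?_
        rw [sup_right]
        refine sup_le (le_sup_of_le_left ?_) (le_sup_of_le_right ?_)
        · exact le_trans (DD_bracket (by omega) (by omega))
            (le_of_eq (congrArg (DD P) (by omega)))
        · refine le_trans (mono (DD_le_UU hst hP p (by omega)) le_rfl) ?_
          exact le_trans (bracket_UU hst _ _) (le_of_eq (congrArg (UU V) (by omega)))

end DDSec


section Helpers
open BSpan Module

variable {L : Type*} [LieRing L] [LieAlgebra ℝ L]

/-- The quotient map by a Lie ideal, as a morphism of Lie algebras. -/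
def quotLieHom (N : LieIdeal ℝ L) : L →ₗ⁅ℝ⁆ L ⧸ N :=
  { (LieSubmodule.Quotient.mk' N).toLinearMap with
    map_lie' := fun {x y} => LieSubmodule.Quotient.mk_bracket (I := N) x y }

lemma quotLieHom_coe (N : LieIdeal ℝ L) :
    (quotLieHom N : L →ₗ[ℝ] L ⧸ N) = (LieSubmodule.Quotient.mk' N).toLinearMap := rfl

lemma ker_quot (N : LieIdeal ℝ L) :
    LinearMap.ker (LieSubmodule.Quotient.mk' N).toLinearMap = N.toSubmodule := by
  ext x
  simp [LieSubmodule.Quotient.mk_eq_zero]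

lemma surj_quot (N : LieIdeal ℝ L) :
    Function.Surjective (LieSubmodule.Quotient.mk' N).toLinearMap :=
  LieSubmodule.Quotient.surjective_mk' N

lemma map_lieSpan {L' : Type*} [LieRing L'] [LieAlgebra ℝ L'] (f : L →ₗ⁅ℝ⁆ L') (S : Set L) :
    LieSubalgebra.map f (LieSubalgebra.lieSpan ℝ L S) = LieSubalgebra.lieSpan ℝ L' (f '' S) := by
  refine le_antisymm ?_ ?_
  · rw [LieSubalgebra.map_le_iff_le_comap, LieSubalgebra.lieSpan_le]
    intro x hx
    exact LieSubalgebra.subset_lieSpan ⟨x, hx, rfl⟩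
  · rw [LieSubalgebra.lieSpan_le]
    rintro _ ⟨x, hx, rfl⟩
    exact (LieSubalgebra.mem_map _ _ _).2
      ⟨x, LieSubalgebra.subset_lieSpan hx, rfl⟩

lemma finrank_map_eq {M : Type*} [AddCommGroup M] [Module ℝ M] [FiniteDimensional ℝ L]
    (f : L →ₗ[ℝ] M) (A : Submodule ℝ L) (h : A ⊓ LinearMap.ker f = ⊥) :
    finrank ℝ (A.map f) = finrank ℝ A := by
  have h1 : A.map f = LinearMap.range (f ∘ₗ A.subtype) := by
    rw [LinearMap.range_comp, Submodule.range_subtype]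
  rw [h1]
  refine LinearMap.finrank_range_of_inj ?_
  rw [← LinearMap.ker_eq_bot]
  refine (Submodule.eq_bot_iff _).2 fun x hx => ?_
  have hx1 : (x : L) ∈ A ⊓ LinearMap.ker f := ⟨x.2, by simpa using hx⟩
  rw [h] at hx1
  exact Subtype.ext (by simpa using hx1)

end Helpers

set_option maxHeartbeats 2000000 in
/-- Let `𝔤 = V₁ ⊕ ⋯ ⊕ V_s` be a stratified real Lie algebra of step `s ≥ 2`
and `𝔤³ = [𝔤,[𝔤,𝔤]]` the third term of its lower central series.  Then `𝔤/𝔤³` is a stratified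
Lie algebra of step 2 with strata the images of `V₁` and `V₂`, and `𝔤` is hypergenerated of
order `k` if and only if `𝔤/𝔤³` is hypergenerated of order `k`. -/
theorem hypergenerated_iff_quotient_lcs3 {L : Type*} [LieRing L] [LieAlgebra ℝ L]
    [FiniteDimensional ℝ L] (V : ℕ → Submodule ℝ L) (s : ℕ) (hs : 2 ≤ s)
    (hst : IsStratification L V s) (k : ℕ) :
    IsStratification (L ⧸ LieModule.lowerCentralSeries ℝ L L 2)
        (fun i => (V i).map
          (LieSubmodule.Quotient.mk' (LieModule.lowerCentralSeries ℝ L L 2)).toLinearMap) 2 ∧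
      (IsHypergenerated L V k ↔
        IsHypergenerated (L ⧸ LieModule.lowerCentralSeries ℝ L L 2)
          (fun i => (V i).map
            (LieSubmodule.Quotient.mk' (LieModule.lowerCentralSeries ℝ L L 2)).toLinearMap) k) := by

  classical
  open BSpan Module in
  set N := LieModule.lowerCentralSeries ℝ L L 2 with hNdef
  set π := (LieSubmodule.Quotient.mk' N).toLinearMap with hπdef
  set W : ℕ → Submodule ℝ (L ⧸ N) := fun i => (V i).map π with hWdef
  have hker : LinearMap.ker π = UU V 2 := by
    rw [hπdef, ker_quot]; exact lcs_eq_UU hst 2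
  have hsurj : Function.Surjective π := surj_quot N
  have hbr : ∀ x y : L, π ⁅x, y⁆ = ⁅π x, π y⁆ := fun x y =>
    LieSubmodule.Quotient.mk_bracket (I := N) x y
  have hmapbs : ∀ A B : Submodule ℝ L,
      (bracketSpan A B).map π = bracketSpan (A.map π) (B.map π) := map_bs π hbr
  have hV2 : bracketSpan (V 1) (V 1) = V 2 := by simpa using hst.bracket_eq 2 le_rfl hs
  have hW2 : bracketSpan (W 1) (W 1) = W 2 := by
    show bracketSpan ((V 1).map π) ((V 1).map π) = (V 2).map π
    rw [← hmapbs, hV2]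
  have hD1 : Disjoint (V 1) (UU V 1) := disjoint_V_UU hst le_rfl
  have hU21 : UU V 2 ≤ UU V 1 := UU_antitone hst (by omega)
  have hdisj : ∀ A : Submodule ℝ L, A ≤ V 1 → A ⊓ LinearMap.ker π = ⊥ := by
    intro A hA
    rw [hker]
    exact le_bot_iff.1 (le_trans (inf_le_inf hA hU21) hD1.le_bot)
  have hrank : ∀ A : Submodule ℝ L, A ≤ V 1 → finrank ℝ (A.map π) = finrank ℝ A :=
    fun A hA => finrank_map_eq π A (hdisj A hA)
  have hmapU2 : (UU V 2).map π = ⊥ := by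
    refine (Submodule.eq_bot_iff _).2 fun x hx => ?_
    obtain ⟨y, hy, rfl⟩ := Submodule.mem_map.1 hx
    have hy2 : y ∈ LinearMap.ker π := by rw [hker]; exact hy
    simpa using hy2
  have key01 : ∀ q : L ⧸ N, q ∈ W 1 → q ∈ W 2 → q = 0 := by
    intro q h1 h2
    obtain ⟨x, hx, rfl⟩ := Submodule.mem_map.1 h1
    obtain ⟨y, hy, hyx⟩ := Submodule.mem_map.1 h2
    have hxy : x - y ∈ LinearMap.ker π := by
      rw [LinearMap.mem_ker, map_sub, hyx, sub_self]
    rw [hker] at hxy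
    have hx2 : x ∈ V 1 ⊓ UU V 1 := by
      refine ⟨hx, ?_⟩
      have hxe : x = y + (x - y) := by abel
      rw [hxe]
      exact Submodule.add_mem _ (V_le_UU (by omega) hy) (hU21 hxy)
    rw [hD1.eq_bot, Submodule.mem_bot] at hx2
    rw [hx2]
    simp
  have hls : ∀ P : Submodule ℝ L,
      ((LieSubalgebra.lieSpan ℝ L (P : Set L)).toSubmodule).map π =
        (LieSubalgebra.lieSpan ℝ (L ⧸ N)
          ((P.map π : Submodule ℝ (L ⧸ N)) : Set (L ⧸ N))).toSubmodule := by
    intro P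
    have h1 := map_lieSpan (quotLieHom N) (P : Set L)
    have h2 : (quotLieHom N) '' (P : Set L) =
        ((P.map π : Submodule ℝ (L ⧸ N)) : Set (L ⧸ N)) := by
      rw [Submodule.map_coe]; rfl
    calc ((LieSubalgebra.lieSpan ℝ L (P : Set L)).toSubmodule).map π
        = (LieSubalgebra.map (quotLieHom N)
            (LieSubalgebra.lieSpan ℝ L (P : Set L))).toSubmodule := rfl
      _ = (LieSubalgebra.lieSpan ℝ (L ⧸ N) ((quotLieHom N) '' (P : Set L))).toSubmodule := by
          rw [h1]
      _ = _ := by rw [h2]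
  have hrankW1 : finrank ℝ (W 1) = finrank ℝ (V 1) := hrank (V 1) le_rfl
  constructor
  · refine ⟨by omega, ?_, ?_, ?_, ?_, ?_, ?_⟩
    · refine DirectSum.isInternal_submodule_of_iSupIndep_of_iSup_eq_top ?_ ?_
      · intro i
        fin_cases i
        · refine Disjoint.mono_right ?_
            ((disjoint_iff.2 ((Submodule.eq_bot_iff _).2
              fun q hq => key01 q hq.1 hq.2)) : Disjoint (W 1) (W 2))
          refine iSup_le fun j => iSup_le fun hj => ?_
          fin_cases j
          · exact absurd rfl hj
          · exact le_rfl
        · refine Disjoint.mono_right ?_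
            ((disjoint_iff.2 ((Submodule.eq_bot_iff _).2
              fun q hq => key01 q hq.2 hq.1)) : Disjoint (W 2) (W 1))
          refine iSup_le fun j => iSup_le fun hj => ?_
          fin_cases j
          · exact le_rfl
          · exact absurd rfl hj
      · have hcov : V 1 ⊔ (V 2 ⊔ UU V 2) = ⊤ := by
          rw [← UU_zero hst]
          refine le_antisymm (sup_le (V_le_UU (by omega))
            (sup_le (V_le_UU (by omega)) (UU_antitone hst (by omega)))) ?_
          refine iSup_le fun i => ?_
          match i with
          | 0 => exact le_sup_left
          | 1 => exact le_sup_of_le_right le_sup_left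
          | (n+2) => exact le_sup_of_le_right (le_sup_of_le_right (V_le_UU (by omega)))
        have htop : W 1 ⊔ (W 2 ⊔ (UU V 2).map π) = ⊤ := by
          show (V 1).map π ⊔ ((V 2).map π ⊔ (UU V 2).map π) = ⊤
          rw [← Submodule.map_sup, ← Submodule.map_sup, hcov, Submodule.map_top,
            LinearMap.range_eq_top.2 hsurj]
        refine le_antisymm le_top ?_
        rw [← htop]
        refine sup_le (le_iSup_of_le 0 le_rfl) (sup_le (le_iSup_of_le 1 le_rfl) ?_)
        rw [hmapU2]
        exact bot_le
    · intro i h2i hi2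
      have hi : i = 2 := by omega
      subst hi
      show bracketSpan (W 1) (W 1) = W 2
      exact hW2
    · show (V 2).map π ≠ ⊥
      intro hbot
      have hV2k : V 2 ≤ LinearMap.ker π := by
        intro x hx
        have hmem : π x ∈ (V 2).map π := Submodule.mem_map_of_mem hx
        rw [hbot] at hmem
        simpa using hmem
      rw [hker] at hV2k
      exact V2_ne_bot hst hs ((disjoint_V_UU hst (by omega)).eq_bot_of_le hV2k)
    · show bracketSpan ((V 1).map π) ((V 2).map π) = ⊥
      rw [← hmapbs]
      refine le_bot_iff.1 ?_
      rw [← hmapU2]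
      exact Submodule.map_mono (le_trans (bracket_le_V hst 2) (V_le_UU (by omega)))
    · show (V 0).map π = ⊥
      rw [hst.zero_eq_bot, Submodule.map_bot]
    · intro i hi
      show (V i).map π = ⊥
      refine le_bot_iff.1 ?_
      rw [← hmapU2]
      exact Submodule.map_mono (V_le_UU (by omega))
  · constructor
    · intro hyp P' hP'le hP'rank
      set P : Submodule ℝ L := V 1 ⊓ Submodule.comap π P' with hPdef
      have hPle : P ≤ V 1 := inf_le_left
      have hmapP : P.map π = P' := by
        refine le_antisymm ?_ ?_
        · intro x hx
          obtain ⟨y, hy, rfl⟩ := Submodule.mem_map.1 hx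
          exact hy.2
        · intro p' hp'
          obtain ⟨x, hxV, rfl⟩ := Submodule.mem_map.1 (hP'le hp')
          exact Submodule.mem_map_of_mem ⟨hxV, hp'⟩
      have hPrank : finrank ℝ P = finrank ℝ (V 1) - k := by
        have h1 := hrank P hPle
        rw [hmapP] at h1
        rw [← h1, hP'rank, hrankW1]
      have hcomm := hyp P hPle hPrank
      have hcommQ : commutatorSubmodule (L ⧸ N) = (commutatorSubmodule L).map π := by
        rw [commutatorSubmodule, commutatorSubmodule, hmapbs, Submodule.map_top,
          LinearMap.range_eq_top.2 hsurj]
      rw [hcommQ, ← hmapP, ← hls P]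
      exact Submodule.map_mono hcomm
    · intro hyp' P hPle hPrank
      set H := LieSubalgebra.lieSpan ℝ L (P : Set L) with hHdef
      have hPH : P ≤ H.toSubmodule := fun x hx => LieSubalgebra.subset_lieSpan hx
      have hP'le : P.map π ≤ W 1 := Submodule.map_mono hPle
      have hP'rank : finrank ℝ (P.map π) = finrank ℝ (W 1) - k := by
        rw [hrank P hPle, hrankW1, hPrank]
      have hq := hyp' (P.map π) hP'le hP'rank
      have h1 : (V 2).map π ≤ (H.toSubmodule).map π := by
        calc (V 2).map π = bracketSpan (W 1) (W 1) := hW2.symm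
          _ ≤ bracketSpan ⊤ ⊤ := mono le_top le_top
          _ = commutatorSubmodule (L ⧸ N) := rfl
          _ ≤ _ := by rw [hls P]; exact hq
      have hV2H : V 2 ≤ H.toSubmodule ⊔ UU V 2 := by
        have h2 := (LinearMap.map_le_map_iff π).1 h1
        rwa [hker] at h2
      set Y : Submodule ℝ L := bracketSpan P P ⊔ UU V 2 with hYdef
      have hPU0 : P ≤ UU V 0 := le_trans hPle (V_le_UU le_rfl)
      have hYU1 : Y ≤ UU V 1 :=
        sup_le (le_trans (mono hPU0 hPU0) (bracket_UU hst 0 0)) hU21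
      have hXcl : bracketSpan (P ⊔ Y) (P ⊔ Y) ≤ P ⊔ Y := by
        refine le_trans (le_of_eq sup_left) (sup_le ?_ ?_)
        · refine le_trans (le_of_eq sup_right) (sup_le ?_ ?_)
          · exact le_sup_of_le_right le_sup_left
          · exact le_sup_of_le_right (le_sup_of_le_right
              (le_trans (mono hPU0 hYU1) (bracket_UU hst 0 1)))
        · refine le_trans (le_of_eq sup_right) (sup_le ?_ ?_)
          · exact le_sup_of_le_right (le_sup_of_le_right
              (le_trans (mono hYU1 hPU0) (bracket_UU hst 1 0)))
          · exact le_sup_of_le_right (le_sup_of_le_right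
              (le_trans (le_trans (mono hYU1 hYU1) (bracket_UU hst 1 1))
                (UU_antitone hst (by omega))))
      have hHX : H.toSubmodule ≤ P ⊔ Y := by
        let K : LieSubalgebra ℝ L :=
          { toSubmodule := P ⊔ Y
            lie_mem' := fun {x} {y} hx hy => hXcl (lie_mem hx hy) }
        have hK : H ≤ K :=
          LieSubalgebra.lieSpan_le.2 fun x hx => Submodule.mem_sup_left hx
        exact fun x hx => hK hx
      have hD1P : P ⊓ UU V 1 = ⊥ := (hD1.mono_left hPle).eq_bot
      have hV2P : V 2 ≤ Y := by
        have hV2X : V 2 ≤ (Y ⊔ P) ⊓ UU V 1 := by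
          refine le_inf ?_ (V_le_UU (by omega))
          refine le_trans hV2H (sup_le ?_ ?_)
          · exact le_trans hHX (le_of_eq (sup_comm _ _))
          · exact le_sup_of_le_left le_sup_right
        rwa [sup_inf_assoc_of_le _ hYU1, hD1P, sup_bot_eq] at hV2X
      have hbase : V 2 ≤ DD P 2 ⊔ UU V 2 := by
        refine le_trans hV2P (sup_le (le_sup_of_le_left ?_) le_sup_right)
        refine le_trans (le_of_eq ?_) (DD_bracket (P := P) le_rfl le_rfl)
        rw [DD_one]
      have claim1 : ∀ i, V (i + 2) ≤ DD P (i + 2) ⊔ UU V (i + 2) := by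
        intro i
        induction i with
        | zero => exact hbase
        | succ n ih =>
          have e : n + 1 + 2 = (n + 2) + 1 := by omega
          rw [e]
          refine le_trans (V_succ_le hst (by omega)) ?_
          refine le_trans (mono le_rfl ih) ?_
          rw [sup_right]
          refine sup_le (DD_key hst hPle hbase (n + 2) (by omega)) ?_
          refine le_sup_of_le_right ?_
          refine le_trans (mono (V_le_UU (h := 0) le_rfl) le_rfl) ?_
          exact le_trans (bracket_UU hst 0 (n + 2)) (le_of_eq (congrArg (UU V) (by omega)))
      have claim3 : ∀ h, 1 ≤ h → UU V h ≤ H.toSubmodule ⊔ UU V (h + 1) := by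
        intro h hh
        refine iSup_le fun i => ?_
        have e : h + 1 + i = (h + i - 1) + 2 := by omega
        rw [e]
        refine le_trans (claim1 (h + i - 1)) (sup_le ?_ ?_)
        · exact le_sup_of_le_left (DD_le_H H hPH _)
        · exact le_sup_of_le_right (UU_antitone hst (by omega))
      have claim4 : ∀ n, UU V 1 ≤ H.toSubmodule ⊔ UU V (1 + n) := by
        intro n
        induction n with
        | zero => exact le_sup_right
        | succ n ih =>
          refine le_trans ih ?_
          refine sup_le le_sup_left ?_
          refine le_trans (claim3 (1 + n) (by omega)) ?_
          exact sup_le le_sup_left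
            (le_sup_of_le_right (le_of_eq (congrArg (UU V) (by omega))))
      rw [commutator_eq_UU hst]
      have hfin := claim4 (s - 1)
      rw [show 1 + (s - 1) = s from by omega, UU_s hst] at hfin
      simpa using hfin
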